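/- arXiv:2404.09351 — 2 statements merged into one kernel-verified Lean document; each statement's English description precedes it below -/
import Mathlib

section
/- Let $1 < p < \infty$ and let $w$ be a weight on $\mathbb{R}^n$. Define $[w]_{A_p^{\mathcal{R}}} = \sup_Q w(Q)^{1/p} \frac{\|\chi_Q w^{-1}\|_{L^{p',\infty}(w)}}{|Q|}$ and $\|w\|_{A_p^{\mathcal{R}}} = \sup_Q \sup_{E \subseteq Q} \frac{|E|}{|Q|} \left( \frac{w(Q)}{w(E)} \right)^{1/p}$, where the inner supremum is over measurable subsets $E$ of $Q$ with $|E| > 0$. Then $[w]_{A_p^{\mathcal{R}}} \le \|w\|_{A_p^{\mathcal{R}}} \le p \, [w]_{A_p^{\mathcal{R}}}$. -/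
open MeasureTheory
open scoped ENNReal

/-- The open axis-parallel cube with lower corner `c` and side length `l` in `ℝⁿ`. -/
def cube (n : ℕ) (c : Fin n → ℝ) (l : ℝ) : Set (Fin n → ℝ) :=
  Set.univ.pi fun i => Set.Ioo (c i) (c i + l)

/-- The weak `L^{p,∞}(μ)` quasi-norm. -/
noncomputable def wkNormMu {X : Type*} [MeasurableSpace X] (μ : Measure X) (p : ℝ)
    (g : X → ℝ) : ℝ≥0∞ :=
  ⨆ (t : ℝ) (_ : 0 < t), ENNReal.ofReal t * μ {x | t < |g x|} ^ (1 / p)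

/-- `[w]_{A_p^𝓡} = sup_Q w(Q)^{1/p} ‖χ_Q w⁻¹‖_{L^{p',∞}(w)} / |Q|`. -/
noncomputable def ApRConst (n : ℕ) (p : ℝ) (w : (Fin n → ℝ) → ℝ) : ℝ≥0∞ :=
  ⨆ (c : Fin n → ℝ) (l : ℝ) (_ : 0 < l),
    (volume.withDensity fun x => ENNReal.ofReal (w x)) (cube n c l) ^ (1 / p) *
      wkNormMu (volume.withDensity fun x => ENNReal.ofReal (w x)) (p / (p - 1))
        ((cube n c l).indicator fun x => (w x)⁻¹) / volume (cube n c l)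

/-- `‖w‖_{A_p^𝓡} = sup_Q sup_{E ⊆ Q, |E| > 0} (|E|/|Q|) (w(Q)/w(E))^{1/p}`. -/
noncomputable def ApRNorm (n : ℕ) (p : ℝ) (w : (Fin n → ℝ) → ℝ) : ℝ≥0∞ :=
  ⨆ (c : Fin n → ℝ) (l : ℝ) (_ : 0 < l) (E : Set (Fin n → ℝ)) (_ : MeasurableSet E)
    (_ : E ⊆ cube n c l) (_ : 0 < volume E),
      volume E / volume (cube n c l) *
        ((∫⁻ x in cube n c l, ENNReal.ofReal (w x)) /
            ∫⁻ x in E, ENNReal.ofReal (w x)) ^ (1 / p)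

section Aux

variable {n : ℕ} {c : Fin n → ℝ} {l : ℝ} {w : (Fin n → ℝ) → ℝ}

lemma cube_measurableSet : MeasurableSet (cube n c l) :=
  MeasurableSet.univ_pi fun _ => measurableSet_Ioo

lemma cube_subset_compact : cube n c l ⊆ Set.univ.pi fun i => Set.Icc (c i) (c i + l) :=
  Set.pi_mono fun _ _ => Set.Ioo_subset_Icc_self

lemma cube_vol_pos (hl : 0 < l) : 0 < volume (cube n c l) := by
  rw [cube, volume_pi_pi]
  refine CanonicallyOrderedAdd.prod_pos.mpr fun i _ => ?_
  rw [Real.volume_Ioo]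
  simpa using hl

lemma cube_vol_ne_top : volume (cube n c l) ≠ ⊤ := by
  rw [cube, volume_pi_pi]
  exact (ENNReal.prod_lt_top fun i _ => by rw [Real.volume_Ioo]; exact ENNReal.ofReal_lt_top).ne

/-- the `w`-measure of any subset of a cube is finite -/
lemma mu_lt_top (hwloc : LocallyIntegrable w volume) {E : Set (Fin n → ℝ)}
    (hE : E ⊆ cube n c l) : (∫⁻ x in E, ENNReal.ofReal (w x)) < ⊤ := by
  have hK : IsCompact (Set.univ.pi fun i => Set.Icc (c i) (c i + l)) :=
    isCompact_univ_pi fun i => isCompact_Icc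
  have hint : IntegrableOn w E volume :=
    (hwloc.integrableOn_isCompact hK).mono_set (hE.trans cube_subset_compact)
  exact hint.lintegral_lt_top

lemma mu_pos (hwm : Measurable w) (hwp : ∀ x, 0 < w x) {E : Set (Fin n → ℝ)}
    (hEm : MeasurableSet E) (hE : 0 < volume E) :
    0 < ∫⁻ x in E, ENNReal.ofReal (w x) := by
  rw [lintegral_pos_iff_support (hwm.ennreal_ofReal)]
  have : (Function.support fun x => ENNReal.ofReal (w x)) = Set.univ := by
    ext x
    simp [Function.support, ENNReal.ofReal_pos.mpr (hwp x), (ENNReal.ofReal_pos.mpr (hwp x)).ne', (hwp x).le, hwp x]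
  rw [Measure.restrict_apply' hEm, this, Set.univ_inter]
  exact hE

end Aux

section Facts

variable {p : ℝ} (hp : 1 < p)
include hp

lemma hq1 : 1 < p / (p - 1) := by
  have h1 : 0 < p - 1 := by linarith
  rw [lt_div_iff₀ h1]; linarith

lemma hq0 : 0 < p / (p - 1) := lt_trans one_pos (hq1 hp)

lemma hpm1 : p - 1 ≠ 0 := by intro h; rw [sub_eq_zero] at h; linarith

lemma hpne : p ≠ 0 := by intro h; linarith

lemma fact_e1 : 1 - 1 / (p / (p - 1)) = 1 / p := by
  have h1 := hpm1 hp; have h2 := hpne hp; field_simp; ring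

lemma fact_e2 : (-(1 / (p / (p - 1)))) * (1 - p / (p - 1)) = 1 / p := by
  have h1 := hpm1 hp; have h2 := hpne hp; field_simp; ring

lemma fact_e3 : (p / (p - 1) - 1)⁻¹ = p - 1 := by
  have h1 := hpm1 hp; have h2 := hpne hp; field_simp; ring

end Facts

lemma rpow_ne_zero' {a : ℝ≥0∞} (ha : a ≠ 0) (ha' : a ≠ ⊤) (y : ℝ) : a ^ y ≠ 0 := by
  simp [ENNReal.rpow_eq_zero_iff, ha, ha']

lemma rpow_ne_top' {a : ℝ≥0∞} (ha : a ≠ 0) (ha' : a ≠ ⊤) (y : ℝ) : a ^ y ≠ ⊤ := by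
  simp [ENNReal.rpow_eq_top_iff, ha, ha']

/-- Kolmogorov-type inequality: `|E| ≤ p ‖χ_Q w⁻¹‖_{L^{p',∞}(μ)} μ(E)^{1/p}`. -/
lemma kolg {n : ℕ} {p : ℝ} (hp : 1 < p) {w : (Fin n → ℝ) → ℝ}
    (hwm : Measurable w) (hwp : ∀ x, 0 < w x) (hwloc : LocallyIntegrable w volume)
    {c : Fin n → ℝ} {l : ℝ} {E : Set (Fin n → ℝ)} (hEm : MeasurableSet E)
    (hEQ : E ⊆ cube n c l) (hvE : 0 < volume E) :
    volume E ≤ ENNReal.ofReal p *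
      wkNormMu (volume.withDensity fun x => ENNReal.ofReal (w x)) (p / (p - 1))
        ((cube n c l).indicator fun x => (w x)⁻¹) *
      ((volume.withDensity fun x => ENNReal.ofReal (w x)) E) ^ (1 / p) := by
  have hq1' : 1 < p / (p - 1) := hq1 hp
  set q : ℝ := p / (p - 1) with hq
  have hq0' : 0 < q := lt_trans one_pos hq1'
  set W : (Fin n → ℝ) → ℝ≥0∞ := fun x => ENNReal.ofReal (w x) with hW
  set μ := volume.withDensity W with hμ
  set g : (Fin n → ℝ) → ℝ := (cube n c l).indicator fun x => (w x)⁻¹ with hg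
  set N := wkNormMu μ q g with hN
  set A := μ E with hA
  have hAeq : A = ∫⁻ x in E, W x := withDensity_apply _ hEm
  have hA0 : A ≠ 0 := by rw [hAeq]; exact (mu_pos hwm hwp hEm hvE).ne'
  have hAtop : A ≠ ⊤ := by rw [hAeq]; exact (mu_lt_top hwloc hEQ).ne
  -- Step 1: layer cake
  have step1 : volume E = ∫⁻ t in Set.Ioi (0:ℝ), (μ.restrict E) {a | t < (w a)⁻¹} := by
    rw [← lintegral_eq_lintegral_meas_lt (μ.restrict E)
      (Filter.Eventually.of_forall fun x => (inv_pos.mpr (hwp x)).le) hwm.inv.aemeasurable]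
    rw [hμ, restrict_withDensity hEm,
      lintegral_withDensity_eq_lintegral_mul _ (f := W) hwm.ennreal_ofReal
        (g := fun x => ENNReal.ofReal ((w x)⁻¹)) hwm.inv.ennreal_ofReal]
    have hone : ∀ x, (W * fun x => ENNReal.ofReal ((w x)⁻¹)) x = 1 := fun x => by
      simp only [Pi.mul_apply, hW]
      rw [← ENNReal.ofReal_mul (hwp x).le, mul_inv_cancel₀ (hwp x).ne', ENNReal.ofReal_one]
    rw [lintegral_congr hone, setLIntegral_one]
  -- Step 2: distribution bound
  have step2 : ∀ t : ℝ, 0 < t →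
      (μ.restrict E) {a | t < (w a)⁻¹} ≤ min A ((N / ENNReal.ofReal t) ^ q) := by
    intro t ht
    have hSm : MeasurableSet {a : Fin n → ℝ | t < (w a)⁻¹} :=
      measurableSet_lt measurable_const hwm.inv
    rw [Measure.restrict_apply hSm]
    refine le_min (measure_mono Set.inter_subset_right) ?_
    have hsub : {a | t < (w a)⁻¹} ∩ E ⊆ {x | t < |g x|} := by
      rintro x ⟨hx1, hx2⟩
      simp only [Set.mem_setOf_eq, hg, Set.indicator_of_mem (hEQ hx2)]
      rwa [abs_of_pos (inv_pos.mpr (hwp x))]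
    refine le_trans (measure_mono hsub) ?_
    have h1 : ENNReal.ofReal t * (μ {x | t < |g x|}) ^ (1/q) ≤ N := by
      rw [hN, wkNormMu]; exact le_iSup_of_le t (le_iSup_of_le ht le_rfl)
    have ht0 : ENNReal.ofReal t ≠ 0 := (ENNReal.ofReal_pos.mpr ht).ne'
    have h2 : (μ {x | t < |g x|}) ^ (1/q) ≤ N / ENNReal.ofReal t :=
      (ENNReal.le_div_iff_mul_le (Or.inl ht0) (Or.inl ENNReal.ofReal_ne_top)).mpr
        (by rwa [mul_comm])
    calc μ {x | t < |g x|} = ((μ {x | t < |g x|}) ^ (1/q)) ^ q := by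
          rw [← ENNReal.rpow_mul, one_div_mul_cancel hq0'.ne', ENNReal.rpow_one]
      _ ≤ (N / ENNReal.ofReal t) ^ q := ENNReal.rpow_le_rpow h2 hq0'.le
  by_cases hN0 : N = 0
  · exfalso
    have hzero : volume E ≤ ∫⁻ _ in Set.Ioi (0:ℝ), (0:ℝ≥0∞) := by
      rw [step1]
      refine lintegral_mono_ae ?_
      rw [ae_restrict_iff' measurableSet_Ioi]
      refine Filter.Eventually.of_forall fun t ht => ?_
      have h := (step2 t ht).trans (min_le_right _ _)
      simpa [hN0, ENNReal.zero_div, ENNReal.zero_rpow_of_pos hq0'] using h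
    rw [lintegral_zero, le_zero_iff] at hzero
    exact hvE.ne' hzero
  by_cases hNtop : N = ⊤
  · have : ENNReal.ofReal p * N * A ^ (1/p) = ⊤ := by
      rw [hNtop, ENNReal.mul_top (ENNReal.ofReal_pos.mpr (lt_trans one_pos hp)).ne',
        ENNReal.top_mul (rpow_ne_zero' hA0 hAtop _)]
    rw [this]; exact le_top
  -- Main case
  set t0 : ℝ≥0∞ := N * A ^ (-(1/q)) with ht0def
  have ht00 : t0 ≠ 0 := mul_ne_zero hN0 (rpow_ne_zero' hA0 hAtop _)
  have ht0top : t0 ≠ ⊤ := ENNReal.mul_ne_top hNtop (rpow_ne_top' hA0 hAtop _)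
  set T := t0.toReal with hTdef
  have hT : 0 < T := ENNReal.toReal_pos ht00 ht0top
  have hofT : ENNReal.ofReal T = t0 := ENNReal.ofReal_toReal ht0top
  have hmono : volume E ≤ ∫⁻ t in Set.Ioi (0:ℝ), min A ((N / ENNReal.ofReal t) ^ q) := by
    rw [step1]
    refine lintegral_mono_ae ?_
    rw [ae_restrict_iff' measurableSet_Ioi]
    exact Filter.Eventually.of_forall fun t ht => step2 t ht
  have hsum : (∫⁻ t in Set.Ioi (0:ℝ), min A ((N / ENNReal.ofReal t) ^ q))
      = (∫⁻ t in Set.Ioc 0 T, min A ((N / ENNReal.ofReal t) ^ q))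
        + ∫⁻ t in Set.Ioi T, min A ((N / ENNReal.ofReal t) ^ q) := by
    rw [← Set.Ioc_union_Ioi_eq_Ioi hT.le, lintegral_union measurableSet_Ioi
      (Set.Ioc_disjoint_Ioi le_rfl)]
  have hfirst : (∫⁻ t in Set.Ioc (0:ℝ) T, min A ((N / ENNReal.ofReal t) ^ q)) ≤ A * t0 := by
    calc (∫⁻ t in Set.Ioc (0:ℝ) T, min A ((N / ENNReal.ofReal t) ^ q))
        ≤ ∫⁻ _ in Set.Ioc (0:ℝ) T, A := lintegral_mono fun t => min_le_left _ _
      _ = A * volume (Set.Ioc (0:ℝ) T) := setLIntegral_const _ _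
      _ = A * t0 := by rw [Real.volume_Ioc, sub_zero, hofT]
  have htail : (∫⁻ t in Set.Ioi T, min A ((N / ENNReal.ofReal t) ^ q))
      ≤ N ^ q * (t0 ^ (1 - q) * ENNReal.ofReal ((q - 1)⁻¹)) := by
    have hle : ∀ t ∈ Set.Ioi T, min A ((N / ENNReal.ofReal t) ^ q)
        ≤ N ^ q * ENNReal.ofReal (t ^ (-q)) := by
      intro t ht
      have htpos : 0 < t := hT.trans ht
      refine (min_le_right _ _).trans_eq ?_
      rw [ENNReal.div_rpow_of_nonneg _ _ hq0'.le, div_eq_mul_inv,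
        ENNReal.ofReal_rpow_of_pos htpos,
        ← ENNReal.ofReal_inv_of_pos (Real.rpow_pos_of_pos htpos q),
        ← Real.rpow_neg htpos.le]
    have hmR : Measurable fun t : ℝ => ENNReal.ofReal (t ^ (-q)) := by fun_prop
    calc (∫⁻ t in Set.Ioi T, min A ((N / ENNReal.ofReal t) ^ q))
        ≤ ∫⁻ t in Set.Ioi T, N ^ q * ENNReal.ofReal (t ^ (-q)) :=
          setLIntegral_mono (measurable_const.mul hmR) hle
      _ = N ^ q * ∫⁻ t in Set.Ioi T, ENNReal.ofReal (t ^ (-q)) := lintegral_const_mul _ hmR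
      _ = N ^ q * ENNReal.ofReal (∫ t in Set.Ioi T, t ^ (-q)) := by
          rw [ofReal_integral_eq_lintegral_ofReal
            (integrableOn_Ioi_rpow_of_lt (by linarith) hT)
            ((ae_restrict_iff' measurableSet_Ioi).mpr (Filter.Eventually.of_forall
              fun t ht => Real.rpow_nonneg (le_of_lt (hT.trans ht)) _))]
      _ = N ^ q * (t0 ^ (1 - q) * ENNReal.ofReal ((q - 1)⁻¹)) := by
          rw [integral_Ioi_rpow_of_lt (by linarith) hT]
          congr 1
          have h1 : -T ^ (-q + 1) / (-q + 1) = T ^ (1 - q) * (q - 1)⁻¹ := by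
            rw [show (-q + 1) = -(q - 1) by ring, div_neg, neg_div, neg_neg,
              div_eq_mul_inv, show -(q-1) = 1 - q by ring]
          rw [h1, ENNReal.ofReal_mul (Real.rpow_nonneg hT.le _),
            ← ENNReal.ofReal_rpow_of_pos hT, hofT]
  have hcomb : A * t0 + N ^ q * (t0 ^ (1 - q) * ENNReal.ofReal ((q - 1)⁻¹))
      = ENNReal.ofReal p * N * A ^ (1 / p) := by
    have e1 : (1:ℝ) + -(1/q) = 1/p := by
      have := fact_e1 hp; rw [hq]; linarith
    have c1 : A * t0 = N * A ^ (1/p) := by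
      rw [ht0def]
      calc A * (N * A ^ (-(1/q))) = N * (A ^ (1:ℝ) * A ^ (-(1/q))) := by
            rw [ENNReal.rpow_one]; ring
        _ = N * A ^ ((1:ℝ) + -(1/q)) := by rw [← ENNReal.rpow_add _ _ hA0 hAtop]
        _ = N * A ^ (1/p) := by rw [e1]
    have c2 : t0 ^ (1 - q) = N ^ (1 - q) * A ^ (1/p) := by
      rw [ht0def, ENNReal.mul_rpow_of_ne_top hNtop (rpow_ne_top' hA0 hAtop _),
        ← ENNReal.rpow_mul]
      rw [hq, fact_e2 hp]
    have c3 : N ^ q * N ^ (1 - q) = N := by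
      rw [← ENNReal.rpow_add _ _ hN0 hNtop, show q + (1 - q) = 1 by ring, ENNReal.rpow_one]
    have c4 : ENNReal.ofReal ((q - 1)⁻¹) = ENNReal.ofReal (p - 1) := by
      rw [hq, fact_e3 hp]
    have c5 : (1:ℝ≥0∞) + ENNReal.ofReal (p - 1) = ENNReal.ofReal p := by
      rw [← ENNReal.ofReal_one, ← ENNReal.ofReal_add one_pos.le (by linarith),
        show (1:ℝ) + (p - 1) = p by ring]
    calc A * t0 + N ^ q * (t0 ^ (1 - q) * ENNReal.ofReal ((q - 1)⁻¹))
        = N * A ^ (1/p) + (N ^ q * N ^ (1 - q)) * (A ^ (1/p) * ENNReal.ofReal (p - 1)) := by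
          rw [c1, c2, c4]; ring
      _ = N * A ^ (1/p) * ((1:ℝ≥0∞) + ENNReal.ofReal (p - 1)) := by rw [c3]; ring
      _ = ENNReal.ofReal p * N * A ^ (1/p) := by rw [c5]; ring
  calc volume E ≤ _ := hmono
    _ = _ := hsum
    _ ≤ A * t0 + N ^ q * (t0 ^ (1 - q) * ENNReal.ofReal ((q - 1)⁻¹)) := add_le_add hfirst htail
    _ = ENNReal.ofReal p * N * A ^ (1 / p) := hcomb

/-- for `1 < p < ∞` and a weight `w`,
`[w]_{A_p^𝓡} ≤ ‖w‖_{A_p^𝓡} ≤ p [w]_{A_p^𝓡}`. -/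
theorem stmt9 (n : ℕ) (p : ℝ) (hp : 1 < p)
    (w : (Fin n → ℝ) → ℝ) (hwm : Measurable w) (hwp : ∀ x, 0 < w x)
    (hwloc : LocallyIntegrable w volume) :
    ApRConst n p w ≤ ApRNorm n p w ∧ ApRNorm n p w ≤ ENNReal.ofReal p * ApRConst n p w := by
  have hp0 : 0 < p := lt_trans one_pos hp
  have hq1' : 1 < p / (p - 1) := hq1 hp
  have e1 : 1 - 1 / (p / (p - 1)) = 1 / p := fact_e1 hp
  constructor
  · -- Part 1
    rw [ApRConst]
    refine iSup_le fun c => iSup_le fun l => iSup_le fun hl => ?_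
    rw [wkNormMu]
    simp_rw [ENNReal.mul_iSup, ENNReal.iSup_div]
    refine iSup_le fun t => iSup_le fun ht => ?_
    set W : (Fin n → ℝ) → ℝ≥0∞ := fun x => ENNReal.ofReal (w x) with hW
    set Q := cube n c l with hQ
    set g : (Fin n → ℝ) → ℝ := Q.indicator fun x => (w x)⁻¹ with hg
    set E := {x | t < |g x|} with hE
    have hEm : MeasurableSet E :=
      measurableSet_lt measurable_const ((hwm.inv.indicator cube_measurableSet).abs)
    have hEQ : E ⊆ Q := by
      intro x hx
      by_contra hxQ
      rw [hE, Set.mem_setOf_eq, hg, Set.indicator_of_notMem hxQ, abs_zero] at hx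
      exact absurd hx (not_lt.mpr ht.le)
    have hwE : ∀ x ∈ E, W x ≤ ENNReal.ofReal t⁻¹ := by
      intro x hx
      rw [hE, Set.mem_setOf_eq, hg, Set.indicator_of_mem (hEQ hx),
        abs_of_pos (inv_pos.mpr (hwp x))] at hx
      exact ENNReal.ofReal_le_ofReal ((lt_inv_comm₀ ht (hwp x)).mp hx).le
    rw [withDensity_apply _ cube_measurableSet, withDensity_apply _ hEm]
    set μE := ∫⁻ x in E, W x with hμE
    set μQ := ∫⁻ x in Q, W x with hμQ
    by_cases hE0 : μE = 0
    · rw [hE0, ENNReal.zero_rpow_of_pos (by positivity)]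
      simp
    · have hEtop : μE ≠ ⊤ := (mu_lt_top hwloc hEQ).ne
      have hle : μE ≤ ENNReal.ofReal t⁻¹ * volume E := by
        calc μE ≤ ∫⁻ _ in E, ENNReal.ofReal t⁻¹ := setLIntegral_mono measurable_const hwE
          _ = ENNReal.ofReal t⁻¹ * volume E := setLIntegral_const _ _
      have hvolE : 0 < volume E := by
        by_contra h
        rw [not_lt, le_zero_iff] at h
        rw [h, mul_zero, le_zero_iff] at hle
        exact hE0 hle
      have key : ENNReal.ofReal t * μE ≤ volume E := by
        calc ENNReal.ofReal t * μE ≤ ENNReal.ofReal t * (ENNReal.ofReal t⁻¹ * volume E) :=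
              mul_le_mul_right hle _
          _ = ENNReal.ofReal (t * t⁻¹) * volume E := by
              rw [ENNReal.ofReal_mul ht.le, mul_assoc]
          _ = volume E := by rw [mul_inv_cancel₀ ht.ne', ENNReal.ofReal_one, one_mul]
      calc μQ ^ (1/p) * (ENNReal.ofReal t * μE ^ (1/(p/(p-1)))) / volume Q
          ≤ volume E / volume Q * (μQ / μE) ^ (1/p) := by
            rw [ENNReal.div_rpow_of_nonneg _ _ (by positivity),
              show (1/(p/(p-1))) = 1 - 1/p by linarith,
              ENNReal.rpow_sub _ _ hE0 hEtop, ENNReal.rpow_one]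
            rw [div_eq_mul_inv, div_eq_mul_inv, div_eq_mul_inv, div_eq_mul_inv]
            calc μQ ^ (1/p) * (ENNReal.ofReal t * (μE * (μE ^ (1/p))⁻¹)) * (volume Q)⁻¹
                = (ENNReal.ofReal t * μE) * (μQ ^ (1/p) * (μE ^ (1/p))⁻¹ * (volume Q)⁻¹) := by
                  ring
              _ ≤ volume E * (μQ ^ (1/p) * (μE ^ (1/p))⁻¹ * (volume Q)⁻¹) :=
                  mul_le_mul_left key _
              _ = volume E * (volume Q)⁻¹ * (μQ ^ (1/p) * (μE ^ (1/p))⁻¹) := by ring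
        _ ≤ ApRNorm n p w := by
            rw [ApRNorm]
            exact le_iSup_of_le c (le_iSup_of_le l (le_iSup_of_le hl (le_iSup_of_le E
              (le_iSup_of_le hEm (le_iSup_of_le hEQ (le_iSup_of_le hvolE le_rfl))))))
  · -- Part 2
    rw [ApRNorm]
    refine iSup_le fun c => iSup_le fun l => iSup_le fun hl => iSup_le fun E =>
      iSup_le fun hEm => iSup_le fun hEQ => iSup_le fun hvE => ?_
    set W : (Fin n → ℝ) → ℝ≥0∞ := fun x => ENNReal.ofReal (w x) with hW
    set Q := cube n c l with hQ
    set μE := ∫⁻ x in E, W x with hμE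
    set μQ := ∫⁻ x in Q, W x with hμQ
    set N := wkNormMu (volume.withDensity W) (p / (p - 1))
      (Q.indicator fun x => (w x)⁻¹) with hN
    have hE0 : μE ≠ 0 := (mu_pos hwm hwp hEm hvE).ne'
    have hEtop : μE ≠ ⊤ := (mu_lt_top hwloc hEQ).ne
    have hr0 : μE ^ (1/p) ≠ 0 := rpow_ne_zero' hE0 hEtop _
    have hrtop : μE ^ (1/p) ≠ ⊤ := rpow_ne_top' hE0 hEtop _
    have hkol : volume E ≤ ENNReal.ofReal p * N * μE ^ (1/p) := by
      have := kolg hp hwm hwp hwloc hEm hEQ hvE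
      rwa [withDensity_apply _ hEm] at this
    calc volume E / volume Q * (μQ / μE) ^ (1/p)
        ≤ (ENNReal.ofReal p * N * μE ^ (1/p)) / volume Q * (μQ / μE) ^ (1/p) :=
          mul_le_mul_left (ENNReal.div_le_div_right hkol _) _
      _ = ENNReal.ofReal p * (μQ ^ (1/p) * N / volume Q) := by
          rw [ENNReal.div_rpow_of_nonneg _ _ (by positivity), div_eq_mul_inv,
            div_eq_mul_inv, div_eq_mul_inv]
          calc ENNReal.ofReal p * N * μE ^ (1/p) * (volume Q)⁻¹ *
                (μQ ^ (1/p) * (μE ^ (1/p))⁻¹)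
              = (μE ^ (1/p) * (μE ^ (1/p))⁻¹) *
                (ENNReal.ofReal p * (μQ ^ (1/p) * N * (volume Q)⁻¹)) := by ring
            _ = ENNReal.ofReal p * (μQ ^ (1/p) * N * (volume Q)⁻¹) := by
                rw [ENNReal.mul_inv_cancel hr0 hrtop, one_mul]
      _ ≤ ENNReal.ofReal p * ApRConst n p w := by
          refine mul_le_mul_right ?_ _
          rw [ApRConst]
          refine le_iSup_of_le c (le_iSup_of_le l (le_iSup_of_le hl ?_))
          rw [withDensity_apply _ cube_measurableSet]
end

section
/- Let $1 < p < \infty$. There exists a constant $C$ depending only on $p$ and the dimension $n$ such that for every $h \in L^1_{loc}(\mathbb{R}^n)$, $h \ne 0$, with $Mh < \infty$ almost everywhere, the weight $w = (Mh)^{1-p}$ satisfies $[w]_{A_p^{\mathcal{R}}} \le C$. More precisely, one may take $[w]_{A_p^{\mathcal{R}}}^p \le \left( 2 \kappa_n \right)^{p-1}$ where $\kappa_n$ depends only on $n$. -/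
open MeasureTheory
open scoped ENNReal

/-- The Hardy–Littlewood maximal function over axis-parallel cubes (with `[0,∞]` values):
`Mh(x) = sup_{Q ∋ x} (1/|Q|) ∫_Q |h|`. -/
noncomputable def maxFn (n : ℕ) (h : (Fin n → ℝ) → ℝ) (x : Fin n → ℝ) : ℝ≥0∞ :=
  ⨆ (c : Fin n → ℝ) (l : ℝ) (_ : 0 < l) (_ : x ∈ cube n c l),
    (∫⁻ y in cube n c l, ENNReal.ofReal |h y|) / volume (cube n c l)

section Helpers

open Set Metric

lemma cube_isOpen (n : ℕ) (c : Fin n → ℝ) (l : ℝ) : IsOpen (cube n c l) :=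
  isOpen_set_pi Set.finite_univ fun _ _ => isOpen_Ioo
lemma volume_cube (n : ℕ) (c : Fin n → ℝ) {l : ℝ} (hl : 0 ≤ l) :
    volume (cube n c l) = ENNReal.ofReal (l ^ n) := by
  rw [cube, volume_pi_pi]
  simp [Real.volume_Ioo, ENNReal.ofReal_pow hl]
lemma volume_cube_ne_zero (n : ℕ) (c : Fin n → ℝ) {l : ℝ} (hl : 0 < l) :
    volume (cube n c l) ≠ 0 := by
  rw [volume_cube n c hl.le]
  simp [ENNReal.ofReal_eq_zero, not_le, pow_pos hl]
lemma volume_cube_ne_top (n : ℕ) (c : Fin n → ℝ) {l : ℝ} (hl : 0 ≤ l) :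
    volume (cube n c l) ≠ ⊤ := by
  rw [volume_cube n c hl]; exact ENNReal.ofReal_ne_top
lemma le_maxFn (n : ℕ) (h : (Fin n → ℝ) → ℝ) {x : Fin n → ℝ} {c : Fin n → ℝ} {l : ℝ}
    (hl : 0 < l) (hx : x ∈ cube n c l) :
    (∫⁻ y in cube n c l, ENNReal.ofReal |h y|) / volume (cube n c l) ≤ maxFn n h x := by
  refine le_trans ?_ (le_iSup _ c)
  refine le_trans ?_ (le_iSup _ l)
  refine le_trans ?_ (le_iSup _ hl)
  exact le_iSup (fun _ : x ∈ cube n c l => (∫⁻ y in cube n c l, ENNReal.ofReal |h y|) / volume (cube n c l)) hx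
lemma isOpen_maxFn_gt (n : ℕ) (h : (Fin n → ℝ) → ℝ) (t : ℝ≥0∞) :
    IsOpen {x | t < maxFn n h x} := by
  rw [isOpen_iff_mem_nhds]
  intro x hx
  simp only [Set.mem_setOf_eq, maxFn, lt_iSup_iff] at hx
  obtain ⟨c, l, hl, hxc, hlt⟩ := hx
  refine Filter.mem_of_superset ((cube_isOpen n c l).mem_nhds hxc) fun y hy => ?_
  exact hlt.trans_le (le_maxFn n h hl hy)
lemma cube_subset_closedBall (n : ℕ) {c : Fin n → ℝ} {l : ℝ} {x : Fin n → ℝ}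
    (hl : 0 < l) (hx : x ∈ cube n c l) : cube n c l ⊆ closedBall x l := by
  intro y hy
  rw [mem_closedBall, dist_pi_le_iff hl.le]
  intro i
  have h1 := hx i (mem_univ i); have h2 := hy i (mem_univ i)
  rw [Real.dist_eq]
  simp only [mem_Ioo] at h1 h2
  rw [abs_le]; constructor <;> linarith [h1.1, h1.2, h2.1, h2.2]

lemma volume_closedBall_le (n : ℕ) (x : Fin n → ℝ) {l : ℝ} (hl : 0 < l) (c : Fin n → ℝ) :
    volume (closedBall x (4 * l)) ≤ (8 : ℝ≥0∞) ^ n * volume (cube n c l) := by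
  rw [Real.volume_pi_closedBall x (by linarith : (0:ℝ) ≤ 4 * l), volume_cube n c hl.le]
  have : (2 * (4 * l)) ^ Fintype.card (Fin n) = 8 ^ n * l ^ n := by
    rw [Fintype.card_fin]; ring
  rw [this, ENNReal.ofReal_mul (by positivity)]
  gcongr
  rw [ENNReal.ofReal_pow (by norm_num)]
  norm_num

/-- Weak (1,1) inequality for the cube maximal function, with constant `8^n`. -/
lemma weak11 (n : ℕ) (g : (Fin n → ℝ) → ℝ) (hg : Measurable g) (t : ℝ≥0∞) :
    t * volume {x | t < maxFn n g x} ≤ (8 : ℝ≥0∞) ^ n * ∫⁻ x, ENNReal.ofReal |g x| := by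
  rcases eq_or_ne t 0 with rfl | ht0
  · simp
  rcases eq_or_ne t ⊤ with rfl | httop
  · have : {x | (⊤:ℝ≥0∞) < maxFn n g x} = ∅ := by
      ext x; simp [not_top_lt]
    simp [this]
  set E := {x | t < maxFn n g x} with hE
  have hch : ∀ x : E, ∃ c, ∃ l, 0 < l ∧ (x : Fin n → ℝ) ∈ cube n c l ∧
      t * volume (cube n c l) < ∫⁻ y in cube n c l, ENNReal.ofReal |g y| := by
    rintro ⟨x, hx⟩
    have hx' : t < maxFn n g x := hx
    simp only [maxFn, lt_iSup_iff] at hx'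
    obtain ⟨c, l, hl, hxc, hlt⟩ := hx'
    exact ⟨c, l, hl, hxc, (ENNReal.lt_div_iff_mul_lt (Or.inl (volume_cube_ne_zero n c hl))
      (Or.inl (volume_cube_ne_top n c hl.le))).1 hlt⟩
  choose cx lx hlx hxcx hint using hch
  have hEopen : IsOpen E := isOpen_maxFn_gt n g t
  -- it suffices to bound `t * volume K` for compact `K ⊆ E`
  rw [mul_comm]
  refine ENNReal.mul_le_of_le_div ?_
  by_contra hc
  push_neg at hc
  obtain ⟨K, hKE, hK, hcK⟩ := MeasureTheory.Measure.Regular.innerRegular hEopen _ hc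
  have hKbound : volume K ≤ ((8 : ℝ≥0∞) ^ n * ∫⁻ x, ENNReal.ofReal |g x|) / t := by
    -- compact cover by the cubes
    obtain ⟨s, hs⟩ := hK.elim_finite_subcover (fun x : E => cube n (cx x) (lx x))
      (fun x => cube_isOpen n _ _)
      (fun x hx => mem_iUnion.2 ⟨⟨x, hKE hx⟩, hxcx ⟨x, hKE hx⟩⟩)
    -- Vitali covering lemma for the finitely many closed balls
    obtain ⟨u, hus, hdisj, hcov⟩ := Vitali.exists_disjoint_subfamily_covering_enlargement_closedBall
      (↑s : Set E) (fun a => (a : Fin n → ℝ)) lx (∑ a ∈ s, |lx a|)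
      (fun a ha => le_trans (le_abs_self _)
        (Finset.single_le_sum (f := fun a => |lx a|) (fun _ _ => abs_nonneg _) ha))
      4 (by norm_num)
    have hufin : u.Finite := s.finite_toSet.subset hus
    -- K is covered by the enlarged balls
    have hKcov : K ⊆ ⋃ b ∈ hufin.toFinset, closedBall (b : Fin n → ℝ) (4 * lx b) := by
      intro x hx
      obtain ⟨a, has, hxa⟩ := mem_iUnion₂.1 (hs hx)
      obtain ⟨b, hbu, hball⟩ := hcov a has
      exact mem_biUnion (hufin.mem_toFinset.2 hbu)
        (hball (cube_subset_closedBall n (hlx a) (hxcx a) hxa))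
    have key : volume K ≤ (8 : ℝ≥0∞) ^ n *
        ∑ b ∈ hufin.toFinset, volume (cube n (cx b) (lx b)) := by
      refine le_trans (measure_mono hKcov) (le_trans (measure_biUnion_finset_le _ _) ?_)
      rw [Finset.mul_sum]
      exact Finset.sum_le_sum fun b _ => volume_closedBall_le n _ (hlx b) (cx b)
    -- the cubes are pairwise disjoint, so the sum of integrals is at most the total integral
    have hdisj' : Set.PairwiseDisjoint (↑hufin.toFinset : Set E)
        (fun b => cube n (cx b) (lx b)) := by
      intro a ha b hb hab
      refine Disjoint.mono (cube_subset_closedBall n (hlx a) (hxcx a))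
        (cube_subset_closedBall n (hlx b) (hxcx b)) ?_
      exact hdisj (hufin.mem_toFinset.1 ha) (hufin.mem_toFinset.1 hb) hab
    have hsum : ∑ b ∈ hufin.toFinset, (t * volume (cube n (cx b) (lx b))) ≤
        ∫⁻ x, ENNReal.ofReal |g x| := by
      calc ∑ b ∈ hufin.toFinset, (t * volume (cube n (cx b) (lx b)))
          ≤ ∑ b ∈ hufin.toFinset, ∫⁻ y in cube n (cx b) (lx b), ENNReal.ofReal |g y| :=
            Finset.sum_le_sum fun b _ => (hint b).le
        _ = ∫⁻ y in ⋃ b ∈ hufin.toFinset, cube n (cx b) (lx b), ENNReal.ofReal |g y| :=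
            (lintegral_biUnion_finset hdisj' (fun b _ => (cube_isOpen n _ _).measurableSet) _).symm
        _ ≤ ∫⁻ x, ENNReal.ofReal |g x| := setLIntegral_le_lintegral _ _
    calc volume K ≤ (8 : ℝ≥0∞) ^ n * ∑ b ∈ hufin.toFinset, volume (cube n (cx b) (lx b)) := key
      _ ≤ (8 : ℝ≥0∞) ^ n * ((∫⁻ x, ENNReal.ofReal |g x|) / t) := by
          gcongr
          refine (ENNReal.le_div_iff_mul_le (Or.inl ht0) (Or.inl httop)).2 ?_
          rw [← Finset.mul_sum] at hsum
          rwa [mul_comm]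
      _ = ((8 : ℝ≥0∞) ^ n * ∫⁻ x, ENNReal.ofReal |g x|) / t := (mul_div_assoc _ _ _).symm
  exact absurd hKbound (not_le.2 hcK)

lemma maxFn_le {n : ℕ} {h : (Fin n → ℝ) → ℝ} {x : Fin n → ℝ} {M : ℝ≥0∞}
    (H : ∀ c l, 0 < l → x ∈ cube n c l →
      (∫⁻ y in cube n c l, ENNReal.ofReal |h y|) / volume (cube n c l) ≤ M) :
    maxFn n h x ≤ M :=
  iSup_le fun c => iSup_le fun l => iSup_le fun hl => iSup_le fun hx => H c l hl hx
lemma mem_cube {n : ℕ} {c : Fin n → ℝ} {l : ℝ} {x : Fin n → ℝ} :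
    x ∈ cube n c l ↔ ∀ i, c i < x i ∧ x i < c i + l := by
  simp [cube, Set.mem_univ_pi, mem_Ioo]
lemma maxFn_mono {n : ℕ} {g h : (Fin n → ℝ) → ℝ} (hg : ∀ z, |g z| ≤ |h z|) (x : Fin n → ℝ) :
    maxFn n g x ≤ maxFn n h x := by
  refine maxFn_le fun c l hl hx => le_trans ?_ (le_maxFn n h hl hx)
  exact ENNReal.div_le_div (lintegral_mono fun y => ENNReal.ofReal_le_ofReal (hg y)) le_rfl

lemma maxFn_triangle {n : ℕ} {f g h : (Fin n → ℝ) → ℝ}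
    (hfg : ∀ z, |f z| ≤ |g z| + |h z|) (hg : Measurable g) (x : Fin n → ℝ) :
    maxFn n f x ≤ maxFn n g x + maxFn n h x := by
  refine maxFn_le fun c l hl hx => ?_
  have hint : (∫⁻ y in cube n c l, ENNReal.ofReal |f y|) ≤
      (∫⁻ y in cube n c l, ENNReal.ofReal |g y|) + ∫⁻ y in cube n c l, ENNReal.ofReal |h y| := by
    rw [← lintegral_add_left (hg.abs.ennreal_ofReal)]
    refine lintegral_mono fun y => ?_
    calc ENNReal.ofReal |f y| ≤ ENNReal.ofReal (|g y| + |h y|) :=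
          ENNReal.ofReal_le_ofReal (hfg y)
      _ = ENNReal.ofReal |g y| + ENNReal.ofReal |h y| :=
          ENNReal.ofReal_add (abs_nonneg _) (abs_nonneg _)
  calc (∫⁻ y in cube n c l, ENNReal.ofReal |f y|) / volume (cube n c l)
      ≤ ((∫⁻ y in cube n c l, ENNReal.ofReal |g y|) +
          ∫⁻ y in cube n c l, ENNReal.ofReal |h y|) / volume (cube n c l) :=
        ENNReal.div_le_div hint le_rfl
    _ = (∫⁻ y in cube n c l, ENNReal.ofReal |g y|) / volume (cube n c l) +
        (∫⁻ y in cube n c l, ENNReal.ofReal |h y|) / volume (cube n c l) := ENNReal.add_div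
    _ ≤ maxFn n g x + maxFn n h x := add_le_add (le_maxFn n g hl hx) (le_maxFn n h hl hx)

/-- pointwise comparability of the maximal function of a function vanishing on `3Q`,
at two points of `Q`. -/
lemma maxFn_compl {n : ℕ} {c : Fin n → ℝ} {l : ℝ} (hl : 0 < l) {g : (Fin n → ℝ) → ℝ}
    (hg0 : ∀ z ∈ cube n (fun i => c i - l) (3 * l), g z = 0)
    {x y : Fin n → ℝ} (hx : x ∈ cube n c l) (hy : y ∈ cube n c l) :
    maxFn n g x ≤ (3 : ℝ≥0∞) ^ n * maxFn n g y := by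
  refine maxFn_le fun a r hr hxR => ?_
  by_cases hz : ∀ z ∈ cube n a r, z ∈ cube n (fun i => c i - l) (3 * l)
  · have hzero : (∫⁻ z in cube n a r, ENNReal.ofReal |g z|) = 0 := by
      have hae : ∀ᵐ z ∂volume, z ∈ cube n a r → ENNReal.ofReal |g z| = 0 :=
        ae_of_all _ fun z hz' => by rw [hg0 z (hz z hz')]; simp
      rw [setLIntegral_congr_fun_ae (cube_isOpen n a r).measurableSet hae, lintegral_zero]
    simp [hzero]
  · push_neg at hz
    obtain ⟨z, hzR, hz3⟩ := hz
    -- the cube R must be large: l < r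
    have hlr : l < r := by
      rw [mem_cube] at hz3
      push_neg at hz3
      obtain ⟨i, hi⟩ := hz3
      have hxi := mem_cube.1 hx i
      have hxRi := mem_cube.1 hxR i
      have hzRi := mem_cube.1 hzR i
      by_cases hcase : c i - l < z i
      · have := hi hcase; linarith [hxi.1, hxi.2, hxRi.1, hxRi.2, hzRi.1, hzRi.2]
      · push_neg at hcase; linarith [hxi.1, hxi.2, hxRi.1, hxRi.2, hzRi.1, hzRi.2]
    set R' := cube n (fun i => a i - l) (r + 2 * l) with hR'
    have hr' : (0:ℝ) < r + 2 * l := by linarith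
    have hsub : cube n a r ⊆ R' := by
      intro w hw
      rw [mem_cube]; intro i
      have hwi := mem_cube.1 hw i
      constructor <;> [linarith [hwi.1]; linarith [hwi.2]]
    have hyR' : y ∈ R' := by
      rw [mem_cube]; intro i
      have hyi := mem_cube.1 hy i
      have hxi := mem_cube.1 hx i
      have hxRi := mem_cube.1 hxR i
      constructor <;> [linarith [hyi.1, hxi.2, hxRi.1]; linarith [hyi.2, hxi.1, hxRi.2]]
    have h2 := le_maxFn n g hr' hyR'
    have h3 : (∫⁻ z in R', ENNReal.ofReal |g z|) ≤ maxFn n g y * volume R' :=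
      (ENNReal.div_le_iff_le_mul (Or.inl (volume_cube_ne_zero n _ hr'))
        (Or.inl (volume_cube_ne_top n _ hr'.le))).1 h2
    have h4 : volume R' ≤ (3 : ℝ≥0∞) ^ n * volume (cube n a r) := by
      rw [hR', volume_cube n _ hr'.le, volume_cube n a (by linarith : (0:ℝ) ≤ r)]
      calc ENNReal.ofReal ((r + 2 * l) ^ n) ≤ ENNReal.ofReal (3 ^ n * r ^ n) := by
            refine ENNReal.ofReal_le_ofReal ?_
            rw [← mul_pow]
            exact pow_le_pow_left₀ (by linarith) (by linarith) n
        _ = (3 : ℝ≥0∞) ^ n * ENNReal.ofReal (r ^ n) := by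
            rw [ENNReal.ofReal_mul (by positivity), ENNReal.ofReal_pow (by norm_num)]
            norm_num
    have h5 : (∫⁻ z in cube n a r, ENNReal.ofReal |g z|) ≤
        ((3 : ℝ≥0∞) ^ n * maxFn n g y) * volume (cube n a r) := by
      calc (∫⁻ z in cube n a r, ENNReal.ofReal |g z|)
          ≤ ∫⁻ z in R', ENNReal.ofReal |g z| := lintegral_mono_set hsub
        _ ≤ maxFn n g y * volume R' := h3
        _ ≤ maxFn n g y * ((3 : ℝ≥0∞) ^ n * volume (cube n a r)) := by gcongr
        _ = ((3 : ℝ≥0∞) ^ n * maxFn n g y) * volume (cube n a r) := by ring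
    exact (ENNReal.div_le_iff_le_mul (Or.inl (volume_cube_ne_zero n a hr))
      (Or.inl (volume_cube_ne_top n a hr.le))).2 h5

/-- positivity: the maximal function is bounded below on every cube. -/
lemma maxFn_pos {n : ℕ} {h : (Fin n → ℝ) → ℝ} (hmeas : Measurable h)
    (hne : ¬ (∀ᵐ x ∂(volume : Measure (Fin n → ℝ)), h x = 0)) (c : Fin n → ℝ) {l : ℝ}
    (hl : 0 < l) :
    ∃ δ : ℝ≥0∞, 0 < δ ∧ ∀ x ∈ cube n c l, δ ≤ maxFn n h x := by
  -- some big cube carries positive mass of |h|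
  have step1 : ∃ m : ℕ, 0 < (∫⁻ z in cube n (fun _ => -(m:ℝ)) (2 * m), ENNReal.ofReal |h z|) := by
    by_contra hcon
    push_neg at hcon
    have hall : ∀ m : ℕ, (∫⁻ z in cube n (fun _ => -(m:ℝ)) (2 * m), ENNReal.ofReal |h z|) = 0 :=
      fun m => le_antisymm (hcon m) zero_le
    have huniv : (Set.univ : Set (Fin n → ℝ)) ⊆ ⋃ m : ℕ, cube n (fun _ => -(m:ℝ)) (2 * m) := by
      intro x _
      obtain ⟨m, hm⟩ := exists_nat_gt (‖x‖)
      refine mem_iUnion.2 ⟨m, mem_cube.2 fun i => ?_⟩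
      have hxi : |x i| ≤ ‖x‖ := by
        simpa [Real.norm_eq_abs] using norm_le_pi_norm x i
      rw [abs_le] at hxi
      constructor <;> [linarith; linarith]
    set ρ := volume.withDensity fun z => ENNReal.ofReal |h z| with hρ
    have hρ0 : ρ Set.univ = 0 := by
      refine le_antisymm (le_trans (measure_mono huniv) (le_trans (measure_iUnion_le _) ?_)) zero_le
      have : ∀ m : ℕ, ρ (cube n (fun _ => -(m:ℝ)) (2 * m)) = 0 := fun m => by
        rw [hρ, withDensity_apply _ (cube_isOpen n _ _).measurableSet]
        exact hall m
      simp [this]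
    rw [hρ, withDensity_apply _ MeasurableSet.univ, Measure.restrict_univ] at hρ0
    have := (lintegral_eq_zero_iff (hmeas.abs.ennreal_ofReal)).1 hρ0
    refine hne ?_
    filter_upwards [this] with z hz
    simp only [Pi.zero_apply, ENNReal.ofReal_eq_zero] at hz
    exact abs_nonpos_iff.1 hz
  obtain ⟨m, hm⟩ := step1
  -- choose a bigger cube containing both `cube n c l` and the big cube
  obtain ⟨m₀, hm₀⟩ := exists_nat_gt (max (‖c‖ + |l|) m)
  have hm₀m : (m:ℝ) ≤ m₀ := le_trans (le_max_right _ _) hm₀.le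
  have hm₀c : ‖c‖ + |l| < m₀ := lt_of_le_of_lt (le_max_left _ _) hm₀
  have hm₀pos : (0:ℝ) < 2 * m₀ := by
    have : (0:ℝ) ≤ ‖c‖ + |l| := by positivity
    linarith
  have hsub1 : cube n (fun _ => -(m:ℝ)) (2 * m) ⊆ cube n (fun _ => -(m₀:ℝ)) (2 * m₀) := by
    intro w hw
    rw [mem_cube]; intro i
    have hwi := mem_cube.1 hw i
    constructor <;> [linarith [hwi.1]; linarith [hwi.2]]
  have hsub2 : cube n c l ⊆ cube n (fun _ => -(m₀:ℝ)) (2 * m₀) := by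
    intro w hw
    rw [mem_cube]; intro i
    have hwi := mem_cube.1 hw i
    have hci : |c i| ≤ ‖c‖ := by simpa [Real.norm_eq_abs] using norm_le_pi_norm c i
    rw [abs_le] at hci
    have hll : l ≤ |l| := le_abs_self l
    constructor <;> [linarith [hwi.1]; linarith [hwi.2]]
  refine ⟨(∫⁻ z in cube n (fun _ => -(m:ℝ)) (2 * m), ENNReal.ofReal |h z|) /
      volume (cube n (fun _ => -(m₀:ℝ)) (2 * m₀)), ?_, ?_⟩
  · exact ENNReal.div_pos hm.ne' (volume_cube_ne_top n _ hm₀pos.le)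
  · intro x hx
    refine le_trans ?_ (le_maxFn n h hm₀pos (hsub2 hx))
    exact ENNReal.div_le_div (lintegral_mono_set hsub1) le_rfl


end Helpers

/-- for `1 < p < ∞` there is a constant `C = C(n,p) < ∞` such that for
every `h ∈ L¹_loc(ℝⁿ)`, `h ≠ 0`, with `Mh < ∞` a.e., the weight `w = (Mh)^{1-p}`
satisfies `[w]_{A_p^𝓡} ≤ C`. -/
theorem stmt16 (n : ℕ) (p : ℝ) (hp : 1 < p) :
    ∃ C : ℝ≥0∞, C < ⊤ ∧
      ∀ h : (Fin n → ℝ) → ℝ, Measurable h → LocallyIntegrable h volume →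
        ¬ (∀ᵐ x ∂volume, h x = 0) → (∀ᵐ x ∂volume, maxFn n h x < ⊤) →
        ApRConst n p (fun x => (maxFn n h x).toReal ^ (1 - p)) ≤ C := by
  have hp0 : (0:ℝ) < p := by linarith
  have hp1 : (0:ℝ) < p - 1 := by linarith
  have h3ne0 : ((3:ℝ≥0∞) ^ n) ≠ 0 := pow_ne_zero n (by norm_num)
  have h3net : ((3:ℝ≥0∞) ^ n) ≠ ⊤ := ENNReal.pow_ne_top (by norm_num)
  refine ⟨((2:ℝ≥0∞) * 24 ^ n) ^ ((p - 1) / p), ?_, ?_⟩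
  · refine ENNReal.rpow_lt_top_of_nonneg (by positivity) ?_
    exact ENNReal.mul_ne_top (by norm_num) (ENNReal.pow_ne_top (by norm_num))
  intro h hmeas hloc hne hfin
  set w : (Fin n → ℝ) → ℝ := fun x => (maxFn n h x).toReal ^ (1 - p) with hw
  have hwdef : ∀ x, w x = (maxFn n h x).toReal ^ (1 - p) := fun _ => rfl
  rw [ApRConst]
  refine iSup_le fun c => iSup_le fun l => iSup_le fun hl => ?_
  set Q := cube n c l with hQ
  set ν := volume.withDensity fun x => ENNReal.ofReal (w x) with hν
  have hvQ0 : volume Q ≠ 0 := volume_cube_ne_zero n c hl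
  have hvQt : volume Q ≠ ⊤ := volume_cube_ne_top n c hl.le
  -- the infimum of the maximal function over Q
  set B := ⨅ x ∈ Q, maxFn n h x with hB
  obtain ⟨δ, hδ0, hδ⟩ := maxFn_pos hmeas hne c hl
  have hB0 : B ≠ 0 :=
    (lt_of_lt_of_le hδ0 (le_iInf fun x => le_iInf fun hx => hδ x hx)).ne'
  have hBF : ∀ x ∈ Q, B ≤ maxFn n h x := fun x hx => iInf₂_le x hx
  have hBtop : B ≠ ⊤ := by
    have hex : ¬ ∀ x ∈ Q, maxFn n h x = ⊤ := by
      intro hallQ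
      have hsub : Q ⊆ {x | ¬ maxFn n h x < ⊤} := fun x hx => by simp [hallQ x hx]
      exact hvQ0 (measure_mono_null hsub (ae_iff.1 hfin))
    push_neg at hex
    obtain ⟨x₀, hx₀Q, hx₀⟩ := hex
    exact fun hBt => hx₀ (top_le_iff.1 (hBt ▸ hBF x₀ hx₀Q))
  -- the 3-fold dilate
  set Q3 := cube n (fun i => c i - l) (3 * l) with hQ3
  have h3l : (0:ℝ) < 3 * l := by linarith
  have hQQ3 : Q ⊆ Q3 := by
    intro z hz
    rw [mem_cube] at hz ⊢
    intro i
    have := hz i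
    constructor <;> [linarith [this.1]; linarith [this.2]]
  classical
  set h1 : (Fin n → ℝ) → ℝ := Q3.piecewise h 0 with hh1
  set g1 : (Fin n → ℝ) → ℝ := Q3.piecewise 0 h with hg1
  have hmeas1 : Measurable h1 :=
    Measurable.piecewise (cube_isOpen n _ _).measurableSet hmeas measurable_const
  have habs : ∀ z, |h z| ≤ |h1 z| + |g1 z| := by
    intro z; by_cases hz : z ∈ Q3 <;> simp [hh1, hg1, Set.piecewise, hz]
  have hg1h : ∀ z, |g1 z| ≤ |h z| := by
    intro z; by_cases hz : z ∈ Q3 <;> simp [hg1, Set.piecewise, hz, abs_nonneg]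
  have hg10 : ∀ z ∈ Q3, g1 z = 0 := fun z hz => by simp [hg1, Set.piecewise, hz]
  have hvol3 : volume Q3 = (3:ℝ≥0∞) ^ n * volume Q := by
    rw [hQ3, hQ, volume_cube n _ h3l.le, volume_cube n c hl.le, mul_pow,
      ENNReal.ofReal_mul (by positivity), ENNReal.ofReal_pow (by norm_num)]
    norm_num
  have hI3 : (∫⁻ z, ENNReal.ofReal |h1 z|) = ∫⁻ z in Q3, ENNReal.ofReal |h z| := by
    rw [← lintegral_indicator (cube_isOpen n (fun i => c i - l) (3*l)).measurableSet]
    congr 1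
    ext z
    by_cases hz : z ∈ Q3 <;> simp [hh1, Set.piecewise, hz, Set.indicator, ← hQ3]
  have hI3B : (∫⁻ z in Q3, ENNReal.ofReal |h z|) ≤ B * ((3:ℝ≥0∞) ^ n * volume Q) := by
    have havg : (∫⁻ z in Q3, ENNReal.ofReal |h z|) / volume Q3 ≤ B :=
      le_iInf fun y => le_iInf fun hy => le_maxFn n h h3l (hQQ3 hy)
    have := (ENNReal.div_le_iff_le_mul (Or.inl (volume_cube_ne_zero n _ h3l))
      (Or.inl (volume_cube_ne_top n _ h3l.le))).1 havg
    rwa [hvol3] at this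
  have hK3 : ∀ x ∈ Q, maxFn n h x ≤ maxFn n h1 x + (3:ℝ≥0∞) ^ n * B := by
    intro x hx
    refine le_trans (maxFn_triangle habs hmeas1 x) (add_le_add le_rfl ?_)
    have hdiv : maxFn n g1 x / (3:ℝ≥0∞) ^ n ≤ B := by
      refine le_iInf fun y => le_iInf fun hy => ?_
      refine (ENNReal.div_le_iff_le_mul (Or.inl h3ne0) (Or.inl h3net)).2 ?_
      calc maxFn n g1 x ≤ (3:ℝ≥0∞) ^ n * maxFn n g1 y := maxFn_compl hl hg10 hx hy
        _ ≤ (3:ℝ≥0∞) ^ n * maxFn n h y := by gcongr; exact maxFn_mono hg1h y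
        _ = maxFn n h y * (3:ℝ≥0∞) ^ n := mul_comm _ _
    have := (ENNReal.div_le_iff_le_mul (Or.inl h3ne0) (Or.inl h3net)).1 hdiv
    rwa [mul_comm B] at this
  -- bound on ν Q
  have hνQ : ν Q ≤ B ^ (1 - p) * volume Q := by
    rw [hν, withDensity_apply _ (cube_isOpen n c l).measurableSet]
    have hpt : ∀ x ∈ Q, ENNReal.ofReal (w x) ≤ B ^ (1 - p) := by
      intro x hx
      have e1 : ENNReal.ofReal (w x) ≤ (maxFn n h x) ^ (1 - p) := by
        rw [hwdef x, ENNReal.toReal_rpow]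
        exact ENNReal.ofReal_toReal_le
      refine e1.trans ?_
      rw [show (1:ℝ) - p = -(p-1) by ring, ENNReal.rpow_neg, ENNReal.rpow_neg]
      exact ENNReal.inv_le_inv.2 (ENNReal.rpow_le_rpow (hBF x hx) hp1.le)
    calc (∫⁻ x in Q, ENNReal.ofReal (w x)) ≤ ∫⁻ _ in Q, B ^ (1 - p) :=
          setLIntegral_mono' (cube_isOpen n c l).measurableSet hpt
      _ = B ^ (1 - p) * volume Q := setLIntegral_const _ _
  -- V and the weak norm bound
  set V := (2:ℝ≥0∞) * 24 ^ n * volume Q * B with hV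
  have hVt : V ≠ ⊤ := by
    rw [hV]
    exact ENNReal.mul_ne_top (ENNReal.mul_ne_top
      (ENNReal.mul_ne_top (by norm_num) (ENNReal.pow_ne_top (by norm_num))) hvQt) hBtop
  have hwk : wkNormMu ν (p / (p - 1)) (Q.indicator fun x => (w x)⁻¹) ≤ V ^ ((p - 1) / p) := by
    rw [wkNormMu]
    refine iSup_le fun t => iSup_le fun ht => ?_
    set s := t ^ (1 / (p - 1)) with hs
    have hs0 : 0 < s := Real.rpow_pos_of_pos ht _
    have hst : s ^ (p - 1) = t := by
      rw [hs, ← Real.rpow_mul ht.le, one_div, inv_mul_cancel₀ hp1.ne', Real.rpow_one]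
    set a := ENNReal.ofReal s with ha
    have ha0 : a ≠ 0 := (ENNReal.ofReal_pos.2 hs0).ne'
    have hat : a ≠ ⊤ := ENNReal.ofReal_ne_top
    set S' := Q ∩ {x | a < maxFn n h x} with hS'
    have hS'meas : MeasurableSet S' :=
      (cube_isOpen n c l).measurableSet.inter (isOpen_maxFn_gt n h a).measurableSet
    -- the superlevel set of the indicator is contained in S'
    have hSsub : {x | t < |Q.indicator (fun x => (w x)⁻¹) x|} ⊆ S' := by
      intro x hx
      simp only [Set.mem_setOf_eq] at hx
      have hxQ : x ∈ Q := by
        by_contra hxQ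
        rw [Set.indicator_of_notMem hxQ, abs_zero] at hx
        linarith
      rw [Set.indicator_of_mem hxQ] at hx
      beta_reduce at hx
      set T := (maxFn n h x).toReal with hT
      have hT0 : 0 ≤ T := ENNReal.toReal_nonneg
      rw [abs_of_nonneg (inv_nonneg.2 (Real.rpow_nonneg hT0 _))] at hx
      have hTpos : 0 < T := by
        rcases hT0.lt_or_eq with hlt | heq
        · exact hlt
        · exfalso
          rw [← heq, Real.zero_rpow (show (1:ℝ) - p ≠ 0 by linarith)] at hx
          simp at hx
          linarith
      have hinv : (T ^ ((1:ℝ) - p))⁻¹ = T ^ (p - 1) := by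
        rw [show (1:ℝ) - p = -(p - 1) by ring, Real.rpow_neg hT0, inv_inv]
      rw [hinv] at hx
      have hsT : s < T := by
        by_contra hcon
        push_neg at hcon
        have hle : T ^ (p - 1) ≤ s ^ (p - 1) := Real.rpow_le_rpow hT0 hcon hp1.le
        rw [hst] at hle
        linarith
      refine ⟨hxQ, ?_⟩
      calc a < ENNReal.ofReal T := (ENNReal.ofReal_lt_ofReal_iff hTpos).2 hsT
        _ ≤ maxFn n h x := by rw [hT]; exact ENNReal.ofReal_toReal_le
    -- ν of S' via the density bound
    have hνS' : ν S' ≤ a ^ (1 - p) * volume S' := by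
      rw [hν, withDensity_apply _ hS'meas]
      have hpt : ∀ x ∈ S', ENNReal.ofReal (w x) ≤ a ^ (1 - p) := by
        rintro x ⟨hxQ, hxa⟩
        rcases eq_or_ne (maxFn n h x) ⊤ with htop | hntop
        · have hw0 : w x = 0 := by
            rw [hw]; simp [htop, Real.zero_rpow (show (1:ℝ) - p ≠ 0 by linarith)]
          simp [hw0]
        · have hsT : s ≤ (maxFn n h x).toReal := by
            have h1' : a.toReal ≤ (maxFn n h x).toReal :=
              ENNReal.toReal_mono hntop (le_of_lt hxa)
            rwa [ha, ENNReal.toReal_ofReal hs0.le] at h1'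
          have hble : ENNReal.ofReal (w x) ≤ ENNReal.ofReal (s ^ (1 - p)) := by
            refine ENNReal.ofReal_le_ofReal ?_
            rw [hwdef x]
            exact Real.rpow_le_rpow_of_nonpos hs0 hsT (by linarith)
          rwa [← ENNReal.ofReal_rpow_of_pos hs0, ← ha] at hble
      calc (∫⁻ x in S', ENNReal.ofReal (w x)) ≤ ∫⁻ _ in S', a ^ (1 - p) :=
            setLIntegral_mono' hS'meas hpt
        _ = a ^ (1 - p) * volume S' := setLIntegral_const _ _
    -- the key distributional estimate
    have hmain : a * volume S' ≤ V := by
      by_cases hcase : a ≤ 2 * 3 ^ n * B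
      · calc a * volume S' ≤ (2 * 3 ^ n * B) * volume Q :=
              mul_le_mul' hcase (measure_mono Set.inter_subset_left)
          _ ≤ V := by
              rw [hV]
              calc (2 * 3 ^ n * B) * volume Q = 2 * 3 ^ n * volume Q * B := by ring
                _ ≤ 2 * 24 ^ n * volume Q * B := by gcongr <;> norm_num
      · push_neg at hcase
        have hhalf : (3:ℝ≥0∞) ^ n * B ≤ a / 2 := by
          refine (ENNReal.le_div_iff_mul_le (Or.inl two_ne_zero) (Or.inl ENNReal.ofNat_ne_top)).2 ?_
          calc (3:ℝ≥0∞) ^ n * B * 2 = 2 * 3 ^ n * B := by ring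
            _ ≤ a := hcase.le
        have hsub2 : S' ⊆ {x | a / 2 < maxFn n h1 x} := by
          rintro x ⟨hxQ, hxa⟩
          simp only [Set.mem_setOf_eq]
          by_contra hcon
          push_neg at hcon
          have hle : maxFn n h x ≤ a / 2 + a / 2 :=
            le_trans (hK3 x hxQ) (add_le_add hcon hhalf)
          rw [ENNReal.add_halves] at hle
          exact absurd (lt_of_lt_of_le hxa hle) (lt_irrefl a)
        calc a * volume S' ≤ a * volume {x | a / 2 < maxFn n h1 x} :=
              mul_le_mul_right (measure_mono hsub2) a
          _ = 2 * ((a / 2) * volume {x | a / 2 < maxFn n h1 x}) := by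
              rw [← mul_assoc, ENNReal.mul_div_cancel two_ne_zero ENNReal.ofNat_ne_top]
          _ ≤ 2 * ((8:ℝ≥0∞) ^ n * ∫⁻ z, ENNReal.ofReal |h1 z|) :=
              mul_le_mul_right (weak11 n h1 hmeas1 (a / 2)) 2
          _ ≤ 2 * ((8:ℝ≥0∞) ^ n * (B * ((3:ℝ≥0∞) ^ n * volume Q))) :=
              mul_le_mul_right (mul_le_mul_right (by rw [hI3]; exact hI3B) _) 2
          _ = V := by
              rw [hV]
              have h83 : (8:ℝ≥0∞) ^ n * (3:ℝ≥0∞) ^ n = 24 ^ n := by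
                rw [← mul_pow]; norm_num
              calc 2 * ((8:ℝ≥0∞) ^ n * (B * ((3:ℝ≥0∞) ^ n * volume Q)))
                  = 2 * ((8:ℝ≥0∞) ^ n * (3:ℝ≥0∞) ^ n) * volume Q * B := by ring
                _ = 2 * 24 ^ n * volume Q * B := by rw [h83]
    -- put it together
    have hν_le : ν {x | t < |Q.indicator (fun x => (w x)⁻¹) x|} ≤ a ^ (1 - p) * (V / a) := by
      refine le_trans (measure_mono hSsub) (le_trans hνS' ?_)
      gcongr
      exact (ENNReal.le_div_iff_mul_le (Or.inl ha0) (Or.inl hat)).2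
        (by rw [mul_comm]; exact hmain)
    have hexp : 1 / (p / (p - 1)) = (p - 1) / p := one_div_div p (p - 1)
    calc ENNReal.ofReal t * ν {x | t < |Q.indicator (fun x => (w x)⁻¹) x|} ^ (1 / (p / (p - 1)))
        ≤ a ^ (p - 1) * (a ^ (1 - p) * (V / a)) ^ ((p - 1) / p) := by
          rw [hexp]
          refine mul_le_mul' ?_ (ENNReal.rpow_le_rpow hν_le (by positivity))
          rw [← hst, ← ENNReal.ofReal_rpow_of_pos hs0, ← ha]
      _ = V ^ ((p - 1) / p) := by
          have e1 : a ^ (1 - p) * (V / a) = a ^ (-p) * V := by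
            rw [div_eq_mul_inv, ← ENNReal.rpow_neg_one a, mul_comm V, ← mul_assoc,
              ← ENNReal.rpow_add _ _ ha0 hat]
            have e0 : (1:ℝ) - p + -1 = -p := by ring
            rw [e0]
          rw [e1, ENNReal.mul_rpow_of_nonneg _ _ (by positivity), ← ENNReal.rpow_mul,
            ← mul_assoc, ← ENNReal.rpow_add _ _ ha0 hat]
          have e2 : p - 1 + -p * ((p - 1) / p) = 0 := by field_simp; ring
          rw [e2, ENNReal.rpow_zero, one_mul]
  -- final combination
  have hfinal : ν Q ^ (1 / p) * wkNormMu ν (p / (p - 1)) (Q.indicator fun x => (w x)⁻¹) ≤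
      ((2:ℝ≥0∞) * 24 ^ n) ^ ((p - 1) / p) * volume Q := by
    have hstep : ν Q ^ (1 / p) * wkNormMu ν (p / (p - 1)) (Q.indicator fun x => (w x)⁻¹) ≤
        (B ^ (1 - p) * volume Q) ^ (1 / p) * V ^ ((p - 1) / p) := by
      exact mul_le_mul' (ENNReal.rpow_le_rpow hνQ (by positivity)) hwk
    refine hstep.trans (le_of_eq ?_)
    rw [hV, ENNReal.mul_rpow_of_nonneg _ _ (by positivity : (0:ℝ) ≤ 1 / p),
      ENNReal.mul_rpow_of_nonneg _ _ (by positivity : (0:ℝ) ≤ (p - 1) / p),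
      ENNReal.mul_rpow_of_nonneg _ _ (by positivity : (0:ℝ) ≤ (p - 1) / p),
      ← ENNReal.rpow_mul]
    calc B ^ ((1 - p) * (1 / p)) * volume Q ^ (1 / p) *
        (((2:ℝ≥0∞) * 24 ^ n) ^ ((p - 1) / p) * volume Q ^ ((p - 1) / p) * B ^ ((p - 1) / p))
        = ((2:ℝ≥0∞) * 24 ^ n) ^ ((p - 1) / p) *
          (volume Q ^ (1 / p) * volume Q ^ ((p - 1) / p)) *
          (B ^ ((1 - p) * (1 / p)) * B ^ ((p - 1) / p)) := by ring
      _ = ((2:ℝ≥0∞) * 24 ^ n) ^ ((p - 1) / p) * volume Q := by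
          rw [← ENNReal.rpow_add _ _ hvQ0 hvQt, ← ENNReal.rpow_add _ _ hB0 hBtop]
          have e3 : 1 / p + (p - 1) / p = 1 := by field_simp; ring
          have e4 : (1 - p) * (1 / p) + (p - 1) / p = 0 := by field_simp; ring
          rw [e3, e4, ENNReal.rpow_one, ENNReal.rpow_zero, mul_one]
  exact ENNReal.div_le_of_le_mul hfinal
end
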